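/- In every BL-algebra L: for every x ∈ L, the double negation of x + x̄ equals 1 (i.e. ¬¬(x + x̄) = 1); and for all x, y ∈ L, if x + y = 1 then x̄ ≤ y. -/

import Mathlib

/-- A BL-algebra: a bounded lattice with a commutative monoid operation `mul`
(written ⊗, with unit `⊤` playing the role of 1 and `⊥` the role of 0),
a residuum `imp` (written →), satisfying residuation, divisibility and
prelinearity. -/
class BLAlgebra (L : Type*) extends Lattice L, BoundedOrder L where
  mul : L → L → L
  imp : L → L → L
  mul_comm : ∀ x y : L, mul x y = mul y x
  mul_assoc : ∀ x y z : L, mul (mul x y) z = mul x (mul y z)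
  mul_top : ∀ x : L, mul x ⊤ = x
  residuation : ∀ x y z : L, mul x y ≤ z ↔ x ≤ imp y z
  divisibility : ∀ x y : L, x ⊓ y = mul x (imp x y)
  prelinearity : ∀ x y : L, imp x y ⊔ imp y x = ⊤

namespace BLAlgebra

variable {L : Type*} [BLAlgebra L]

/-- Negation: x̄ := x → 0. -/
def neg (x : L) : L := imp x ⊥

/-- Pseudo-addition: x ⊘ y := x̄ → y. -/
def oslash (x y : L) : L := imp (neg x) y

/-- Addition: x + y := (x ⊘ y) ∧ (y ⊘ x). -/
def add (x y : L) : L := oslash x y ⊓ oslash y x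

end BLAlgebra

open BLAlgebra


section Aux
open BLAlgebra
variable {L : Type*} [BLAlgebra L]

private lemma res {x y z : L} : mul x y ≤ z ↔ x ≤ imp y z := residuation x y z

private lemma mul_mono_right {u v : L} (a : L) (h : u ≤ v) : mul a u ≤ mul a v := by
  rw [BLAlgebra.mul_comm a u, res]
  exact le_trans h (res.mp (le_of_eq (BLAlgebra.mul_comm v a)))

private lemma mul_mono_left {u v : L} (a : L) (h : u ≤ v) : mul u a ≤ mul v a := by
  rw [BLAlgebra.mul_comm u a, BLAlgebra.mul_comm v a]
  exact mul_mono_right a h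

private lemma mul_neg_self (x : L) : mul x (neg x) = ⊥ := by
  have := divisibility x (⊥ : L)
  rw [inf_bot_eq] at this
  exact this.symm

private lemma le_negneg (x : L) : x ≤ neg (neg x) := by
  show x ≤ imp (neg x) ⊥
  rw [← res]
  exact le_of_eq (mul_neg_self x)

private lemma imp_eq_top_iff {x y : L} : imp x y = ⊤ ↔ x ≤ y := by
  constructor
  · intro h
    have h2 : (⊤ : L) ≤ imp x y := le_of_eq h.symm
    have : mul (⊤ : L) x ≤ y := res.mpr h2
    rwa [BLAlgebra.mul_comm, mul_top] at this
  · intro h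
    refine top_le_iff.mp (res.mp ?_)
    rwa [BLAlgebra.mul_comm, mul_top]

end Aux

/-- In every BL-algebra, ¬¬(x + x̄) = 1; and x + y = 1 implies x̄ ≤ y. -/
theorem add_neg_properties {L : Type*} [BLAlgebra L] :
    (∀ x : L, neg (neg (add x (neg x))) = ⊤) ∧
    (∀ x y : L, add x y = ⊤ → neg x ≤ y) := by
  constructor
  · intro x
    set nnx := neg (neg x) with hnnx
    set a := imp nnx x with ha
    have hadd : add x (neg x) = a := by
      show imp (neg x) (neg x) ⊓ imp nnx x = a
      rw [imp_eq_top_iff.mpr le_rfl, top_inf_eq]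
    have hx : mul nnx a = x := by
      have h1 := divisibility nnx x
      rw [inf_eq_right.mpr (le_negneg x)] at h1
      exact h1.symm
    have hnxa : neg x ≤ a := by
      rw [ha, ← res]
      calc mul (neg x) nnx = ⊥ := mul_neg_self (neg x)
        _ ≤ x := bot_le
    have hna : neg a ≤ nnx := by
      show neg a ≤ imp (neg x) ⊥
      rw [← res]
      calc mul (neg a) (neg x) ≤ mul (neg a) a := mul_mono_right _ hnxa
        _ = mul a (neg a) := BLAlgebra.mul_comm _ _
        _ = ⊥ := mul_neg_self a
    have himp : imp nnx (neg a) = neg x := by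
      apply le_antisymm
      · show imp nnx (neg a) ≤ imp x ⊥
        rw [← res, ← hx, ← BLAlgebra.mul_assoc]
        calc mul (mul (imp nnx (neg a)) nnx) a
            ≤ mul (neg a) a := mul_mono_left _ (res.mpr le_rfl)
          _ = mul a (neg a) := BLAlgebra.mul_comm _ _
          _ = ⊥ := mul_neg_self a
      · rw [← res]
        calc mul (neg x) nnx = ⊥ := mul_neg_self (neg x)
          _ ≤ neg a := bot_le
    have hnab : neg a = ⊥ := by
      calc neg a = nnx ⊓ neg a := (inf_eq_right.mpr hna).symm
        _ = mul nnx (imp nnx (neg a)) := divisibility _ _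
        _ = mul nnx (neg x) := by rw [himp]
        _ = mul (neg x) nnx := BLAlgebra.mul_comm _ _
        _ = ⊥ := mul_neg_self (neg x)
    rw [hadd, hnab]
    show imp (⊥ : L) ⊥ = ⊤
    exact imp_eq_top_iff.mpr le_rfl
  · intro x y h
    have h1 : oslash x y = ⊤ := top_le_iff.mp (h ▸ inf_le_left)
    exact imp_eq_top_iff.mp h1
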